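/- Let C be a 3×3 unitary matrix with entries a^{(i,j)}, e^{iΔ} = det C, and λ ∈ ℝ with e^{iλ} ≠ a^{(2,2)} and a^{(1,1)}e^{iλ} − e^{iΔ} conj(a^{(3,3)}) ≠ 0. Then tr T(λ) = e^{iλ}/A(λ) + e^{−iλ}/conj(D(λ)), where in particular D(λ) ≠ 0. -/

import Mathlib

open Complex Matrix ComplexConjugate

noncomputable section

/-- `A(λ)` for a 3×3 coin matrix `M`. -/
def coefA (M : Matrix (Fin 3) (Fin 3) ℂ) (lam : ℝ) : ℂ :=
  M 0 0 + M 0 1 * M 1 0 / (Complex.exp (lam * Complex.I) - M 1 1)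

/-- `D(λ)` for a 3×3 coin matrix `M`. -/
def coefD (M : Matrix (Fin 3) (Fin 3) ℂ) (lam : ℝ) : ℂ :=
  M 2 2 + M 2 1 * M 1 2 / (Complex.exp (lam * Complex.I) - M 1 1)

/-- The transfer matrix `T(λ)` of a 3×3 coin matrix `M`. -/
def transfer (M : Matrix (Fin 3) (Fin 3) ℂ) (lam : ℝ) : Matrix (Fin 2) (Fin 2) ℂ :=
  (M 0 0 * Complex.exp (lam * Complex.I) - M.det * conj (M 2 2))⁻¹ •
    !![Complex.exp (lam * Complex.I) * (Complex.exp (lam * Complex.I) - M 1 1),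
        -(M 0 2 * Complex.exp (lam * Complex.I)) - M.det * conj (M 2 0);
        M 2 0 * Complex.exp (lam * Complex.I) + M.det * conj (M 0 2),
        -(M.det * (Complex.exp (-(lam * Complex.I)) - conj (M 1 1)))]

/-- `tr T(λ) = e^{iλ}/A(λ) + e^{−iλ}/conj D(λ)`, where in
particular `D(λ) ≠ 0`. -/
theorem trace_transfer_eq (M : Matrix (Fin 3) (Fin 3) ℂ)
    (hM : M ∈ Matrix.unitaryGroup (Fin 3) ℂ) (lam : ℝ)
    (hne : Complex.exp (lam * Complex.I) ≠ M 1 1)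
    (hden : M 0 0 * Complex.exp (lam * Complex.I) - M.det * conj (M 2 2) ≠ 0) :
    coefD M lam ≠ 0 ∧
    (transfer M lam).trace =
      Complex.exp (lam * Complex.I) / coefA M lam +
        Complex.exp (-(lam * Complex.I)) / conj (coefD M lam) := by
  set e := Complex.exp (lam * Complex.I) with he
  set f := Complex.exp (-(lam * Complex.I)) with hf
  have hef : e * f = 1 := by
    rw [he, hf, ← Complex.exp_add]; simp
  have hconj_e : conj e = f := by
    rw [he, hf, ← Complex.exp_conj]
    congr 1
    simp [Complex.conj_ofReal]
  have hU : M * Mᴴ = 1 := by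
    have := (Matrix.mem_unitaryGroup_iff).mp hM
    simpa [Matrix.star_eq_conjTranspose] using this
  have hU' : Mᴴ * M = 1 := by
    have := (Matrix.mem_unitaryGroup_iff').mp hM
    simpa [Matrix.star_eq_conjTranspose] using this
  have hdet : M.det * conj M.det = 1 := by
    have := congrArg Matrix.det hU
    simpa [Matrix.det_mul, Matrix.det_conjTranspose] using this
  have hadj : M.adjugate = M.det • Mᴴ := by
    calc M.adjugate = (Mᴴ * M) * M.adjugate := by rw [hU', one_mul]
    _ = Mᴴ * (M * M.adjugate) := by rw [Matrix.mul_assoc]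
    _ = Mᴴ * (M.det • (1 : Matrix (Fin 3) (Fin 3) ℂ)) := by rw [Matrix.mul_adjugate]
    _ = M.det • Mᴴ := by rw [Matrix.mul_smul, Matrix.mul_one]
  have key : ∀ i j, M.adjugate i j = M.det * conj (M j i) := by
    intro i j
    rw [hadj]
    simp [Matrix.conjTranspose_apply]
  have h22 : M.det * conj (M 2 2) = M 0 0 * M 1 1 - M 0 1 * M 1 0 := by
    have := key 2 2
    rw [Matrix.adjugate_fin_three] at this
    simpa using this.symm
  have h00 : M.det * conj (M 0 0) = M 1 1 * M 2 2 - M 1 2 * M 2 1 := by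
    have := key 0 0
    rw [Matrix.adjugate_fin_three] at this
    simpa using this.symm
  have h1 : e - M 1 1 ≠ 0 := sub_ne_zero.mpr hne
  have h1' : f - conj (M 1 1) ≠ 0 := by
    intro h
    apply h1
    have h2 : conj (e - M 1 1) = 0 := by rw [map_sub, hconj_e]; exact h
    have := congrArg (starRingEnd ℂ) h2
    simpa using this
  -- A * (e - a11) = hden quantity
  have hA : coefA M lam * (e - M 1 1) = M 0 0 * e - M.det * conj (M 2 2) := by
    rw [coefA, ← he]
    field_simp
    linear_combination h22
  have hAne : coefA M lam ≠ 0 := by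
    intro h
    apply hden
    rw [← hA, h, zero_mul]
  -- conj D * (f - conj a11) = -conj d * f * hden
  have h00c : conj M.det * M 0 0 = conj (M 1 1) * conj (M 2 2) - conj (M 1 2) * conj (M 2 1) := by
    have := congrArg (starRingEnd ℂ) h00
    simpa [_root_.map_mul, map_sub, mul_comm] using this
  have hDc : conj (coefD M lam) * (f - conj (M 1 1)) =
      -conj M.det * f * (M 0 0 * e - M.det * conj (M 2 2)) := by
    rw [coefD, ← he, map_add, map_div₀, map_sub, _root_.map_mul, hconj_e]
    field_simp
    linear_combination h00c + (conj M.det * M 0 0) * hef - (f * conj (M 2 2)) * hdet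
  have hDne : conj (coefD M lam) ≠ 0 := by
    intro h
    rw [h, zero_mul] at hDc
    have hfne : f ≠ 0 := Complex.exp_ne_zero _
    have hdne : conj M.det ≠ 0 := by
      intro h'
      rw [h', mul_zero] at hdet
      exact zero_ne_one hdet
    have := hDc.symm
    rcases mul_eq_zero.mp this with h' | h'
    · rcases mul_eq_zero.mp h' with h'' | h''
      · exact hdne (by simpa using neg_eq_zero.mp h'')
      · exact hfne h''
    · exact hden h'
  refine ⟨fun h => hDne (by rw [h, map_zero]), ?_⟩
  have htr : (transfer M lam).trace =
      (M 0 0 * e - M.det * conj (M 2 2))⁻¹ *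
        (e * (e - M 1 1) + -(M.det * (f - conj (M 1 1)))) := by
    rw [transfer, Matrix.trace_smul, Matrix.trace_fin_two_of]
    simp [smul_eq_mul]
    rfl
  rw [htr]
  have hAeq : coefA M lam = (M 0 0 * e - M.det * conj (M 2 2)) / (e - M 1 1) :=
    (eq_div_iff h1).mpr hA
  have hDceq : conj (coefD M lam) =
      (-conj M.det * f * (M 0 0 * e - M.det * conj (M 2 2))) / (f - conj (M 1 1)) :=
    (eq_div_iff h1').mpr hDc
  rw [hAeq, hDceq]
  have hdne : conj M.det ≠ 0 := by
    intro h'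
    rw [h', mul_zero] at hdet
    exact zero_ne_one hdet
  have hfne : f ≠ 0 := Complex.exp_ne_zero _
  field_simp
  linear_combination (conj (M 1 1) - f) * hdet
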